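/- (Main theorem, (iii) ⇒ (ii)) Let Π : H2 → H2 be the orthogonal projection onto ker(B1). Suppose there exist a continuous linear map D1 : H2 → H1 and a linear map D2 : H2 → H1 such that A1* = D1 ∘ B1* and A2* = (D1 + D2 ∘ Π) ∘ B2*. Then: (a) there exists C > 0 such that ‖A1* h4‖ ≤ C ‖B1* h4‖ for all h4 ∈ H4; and (b) for every h5 ∈ H5 and every sequence (y_n) in H4 such that B1* y_n converges to B2* h5 in H2, the sequence A1* y_n converges to A2* h5 in H1. -/

import Mathlib

open ContinuousLinearMap Filter

/-- Main theorem, (iii) ⇒ (ii): factorization implies mixed majorization. -/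
theorem mixed_factorization_implies_majorization
    {H1 H2 H4 H5 : Type*}
    [NormedAddCommGroup H1] [InnerProductSpace ℝ H1] [CompleteSpace H1]
    [NormedAddCommGroup H2] [InnerProductSpace ℝ H2] [CompleteSpace H2]
    [NormedAddCommGroup H4] [InnerProductSpace ℝ H4] [CompleteSpace H4]
    [NormedAddCommGroup H5] [InnerProductSpace ℝ H5] [CompleteSpace H5]
    (A1 : H1 →L[ℝ] H4) (A2 : H1 →L[ℝ] H5)
    (B1 : H2 →L[ℝ] H4) (B2 : H2 →L[ℝ] H5)
    (P : H2 →L[ℝ] H2)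
    (hP : P = (LinearMap.ker (B1 : H2 →ₗ[ℝ] H4)).subtypeL.comp
      (Submodule.orthogonalProjectionOnto (LinearMap.ker (B1 : H2 →ₗ[ℝ] H4))))
    (D1 : H2 →L[ℝ] H1) (D2 : H2 →ₗ[ℝ] H1)
    (hD1 : ∀ h4 : H4, adjoint A1 h4 = D1 (adjoint B1 h4))
    (hD2 : ∀ h5 : H5, adjoint A2 h5 = D1 (adjoint B2 h5) + D2 (P (adjoint B2 h5))) :
    (∃ C : ℝ, 0 < C ∧ ∀ h4 : H4, ‖adjoint A1 h4‖ ≤ C * ‖adjoint B1 h4‖) ∧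
    (∀ (h5 : H5) (y : ℕ → H4),
      Tendsto (fun n => adjoint B1 (y n)) atTop (nhds (adjoint B2 h5)) →
      Tendsto (fun n => adjoint A1 (y n)) atTop (nhds (adjoint A2 h5))) := by
  constructor
  · refine ⟨‖D1‖ + 1, by positivity, fun h4 => ?_⟩
    rw [hD1 h4]
    calc ‖D1 (adjoint B1 h4)‖ ≤ ‖D1‖ * ‖adjoint B1 h4‖ := D1.le_opNorm _
      _ ≤ (‖D1‖ + 1) * ‖adjoint B1 h4‖ := by
          apply mul_le_mul_of_nonneg_right (by linarith) (norm_nonneg _)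
  · intro h5 y hy
    -- B2* h5 lies in (ker B1)ᗮ since it's a limit of elements of range B1* ⊆ (ker B1)ᗮ
    have hmem : adjoint B2 h5 ∈ (LinearMap.ker (B1 : H2 →ₗ[ℝ] H4))ᗮ := by
      have hcl : IsClosed ((LinearMap.ker (B1 : H2 →ₗ[ℝ] H4))ᗮ : Set H2) :=
        Submodule.isClosed_orthogonal _
      have : ∀ n, adjoint B1 (y n) ∈ (LinearMap.ker (B1 : H2 →ₗ[ℝ] H4))ᗮ := by
        intro n x hx
        have : B1 x = 0 := hx
        rw [real_inner_comm, adjoint_inner_left, this, inner_zero_right]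
      exact hcl.mem_of_tendsto hy (Filter.Eventually.of_forall this)
    have hP0 : P (adjoint B2 h5) = 0 := by
      rw [hP]
      simp only [comp_apply, Submodule.subtypeL_apply,
        Submodule.orthogonalProjectionOnto_apply_of_mem_orthogonal hmem,
        Submodule.coe_zero]
    have hA2 : adjoint A2 h5 = D1 (adjoint B2 h5) := by
      rw [hD2 h5, hP0, map_zero, add_zero]
    have : Tendsto (fun n => D1 (adjoint B1 (y n))) atTop (nhds (D1 (adjoint B2 h5))) :=
      (D1.continuous.tendsto _).comp hy
    rw [hA2]
    simpa [hD1] using this
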